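/- Let a, b ≥ 1 and let A, B be disjoint finite sets with |A| = a, |B| = b. With good colorings defined as before, Σ_{good c} t^{g(c)+w(c)} = Σ_{i=0}^{min(a,b)} C(2i,i)·C(a,i)·C(b,i)·t^i·(1+t)^{a+b-2i}. -/

import Mathlib

open Polynomial Finset

/-- Four colors: red, green, white, black. -/
inductive Col
  | R | G | W | K
deriving DecidableEq

instance instFintypeCol : Fintype Col :=
  ⟨{Col.R, Col.G, Col.W, Col.K}, fun x => by cases x <;> decide⟩

variable {R : Type*} [CommRing R]

lemma sum_col (c1 c2 : Col) (h : c1 ≠ c2) (g : Col → R) :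
    ∑ c : Col, g c = g c1 + g c2 + ∑ c ∈ univ.filter (fun c => c ≠ c1 ∧ c ≠ c2), g c := by
  have h1 : (univ : Finset Col) = insert c1 (insert c2 (univ.filter fun c => c ≠ c1 ∧ c ≠ c2)) := by
    ext c; simp; tauto
  conv_lhs => rw [h1]
  rw [sum_insert (by simp [h]), sum_insert (by simp), add_assoc]

lemma colCardCons (n : ℕ) (c : Col) (f : Fin n → Col) (d : Col) :
    (univ.filter fun x : Fin (n+1) => (Fin.cons c f : Fin (n+1) → Col) x = d).card
      = (if c = d then 1 else 0) + (univ.filter fun x : Fin n => f x = d).card := by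
  rw [card_filter, Fin.sum_univ_succ, card_filter]
  simp

def Wsum (w : Col → R) (c1 c2 : Col) : R := ∑ c ∈ univ.filter (fun c => c ≠ c1 ∧ c ≠ c2), w c

def Fform (w : Col → R) (c1 c2 : Col) (m j k : ℕ) : R :=
  (m.choose j * (m - j).choose k : ℕ) * (w c1 ^ j * w c2 ^ k * (Wsum w c1 c2) ^ (m - j - k))

lemma key (c1 c2 : Col) (h12 : c1 ≠ c2) (w : Col → R) :
    ∀ n j k : ℕ,
      (∑ f ∈ (univ : Finset (Fin n → Col)).filter
          (fun f => (univ.filter fun x => f x = c1).card = j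
            ∧ (univ.filter fun x => f x = c2).card = k),
        ∏ x, w (f x))
      = Fform w c1 c2 n j k
  | 0, j, k => by
    rw [Finset.sum_filter, Fintype.sum_unique]
    simp only [Finset.univ_eq_empty, Finset.filter_empty, Finset.card_empty,
      Finset.prod_empty]
    match j, k with
    | 0, 0 => simp [Fform]
    | 0, k+1 => simp [Fform]
    | j+1, k => simp [Fform]
  | (n+1), j, k => by
    rw [Finset.sum_filter, ← Equiv.sum_comp (Fin.consEquiv (fun _ => Col)), Fintype.sum_prod_type]
    have hcons : ∀ (p : Col × (Fin n → Col)), (Fin.consEquiv (fun _ => Col)) p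
        = (Fin.cons p.1 p.2 : Fin (n+1) → Col) := fun p => rfl
    simp only [hcons, colCardCons, Fin.prod_univ_succ, Fin.cons_zero, Fin.cons_succ]
    rw [sum_col c1 c2 h12]
    have gen0 : ∀ (r : R) (j' k' : ℕ),
        (∑ f' : Fin n → Col, if ((univ.filter fun x => f' x = c1).card = j'
            ∧ (univ.filter fun x => f' x = c2).card = k') then r * ∏ x, w (f' x) else 0)
          = r * Fform w c1 c2 n j' k' := by
      intro r j' k'
      rw [← key c1 c2 h12 w n j' k', Finset.sum_filter, Finset.mul_sum]
      simp [mul_ite]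
    have p3 : (∑ c ∈ univ.filter (fun c => c ≠ c1 ∧ c ≠ c2),
        ∑ f' : Fin n → Col, if ((if c = c1 then 1 else 0) + (univ.filter fun x => f' x = c1).card = j
            ∧ ((if c = c2 then 1 else 0) + (univ.filter fun x => f' x = c2).card = k))
          then w c * ∏ x, w (f' x) else 0)
        = Wsum w c1 c2 * Fform w c1 c2 n j k := by
      rw [Wsum, Finset.sum_mul]
      refine Finset.sum_congr rfl (fun c hc => ?_)
      simp only [mem_filter] at hc
      simp only [if_neg hc.2.1, if_neg hc.2.2, zero_add]
      exact gen0 (w c) j k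
    rw [if_pos rfl, if_neg h12, if_neg (Ne.symm h12), if_pos rfl, p3]
    match j, k with
    | 0, 0 =>
      rw [Finset.sum_eq_zero (fun f _ => if_neg (by omega)),
        Finset.sum_eq_zero (fun f _ => if_neg (by omega))]
      simp only [Fform, Nat.sub_zero, Nat.choose_zero_right, pow_zero, Nat.mul_one, pow_succ]
      push_cast
      ring
    | 0, k+1 =>
      rw [Finset.sum_eq_zero (fun f _ => if_neg (by omega))]
      have hc2 : ∀ mA mB : ℕ, ((0 + mA = 0 ∧ 1 + mB = k + 1)) ↔ (mA = 0 ∧ mB = k) := by omega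
      simp only [hc2]
      rw [gen0 (w c2) 0 k]
      simp only [Fform, Nat.sub_zero, Nat.choose_zero_right, pow_zero, Nat.succ_sub_succ,
        Nat.choose_succ_succ n k, one_mul, Nat.one_mul]
      rcases le_or_gt (k+1) n with h | h
      · rw [show n - k = (n - (k+1)) + 1 from by omega, pow_succ]
        push_cast
        ring
      · rw [Nat.choose_eq_zero_of_lt h]
        push_cast
        ring
    | j+1, 0 =>
      have hc1 : ∀ mA mB : ℕ, ((1 + mA = j + 1 ∧ 0 + mB = 0)) ↔ (mA = j ∧ mB = 0) := by omega
      simp only [hc1]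
      rw [gen0 (w c1) j 0, Finset.sum_eq_zero (fun f _ => if_neg (by omega))]
      simp only [Fform, Nat.sub_zero, Nat.choose_zero_right, pow_zero, Nat.succ_sub_succ,
        Nat.choose_succ_succ n j, Nat.mul_one, mul_one]
      rcases le_or_gt (j+1) n with h | h
      · rw [show n - j = (n - (j+1)) + 1 from by omega, pow_succ]
        push_cast
        ring
      · rw [Nat.choose_eq_zero_of_lt h]
        push_cast
        ring
    | j+1, k+1 =>
      have hc1 : ∀ mA mB : ℕ, ((1 + mA = j + 1 ∧ 0 + mB = k + 1)) ↔ (mA = j ∧ mB = k + 1) := by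
        omega
      have hc2 : ∀ mA mB : ℕ, ((0 + mA = j + 1 ∧ 1 + mB = k + 1)) ↔ (mA = j + 1 ∧ mB = k) := by
        omega
      simp only [hc1, hc2]
      rw [gen0 (w c1) j (k+1), gen0 (w c2) (j+1) k]
      simp only [Fform, Nat.succ_sub_succ, Nat.choose_succ_succ n j]
      rcases le_or_gt (j+1) n with h | h
      · have e1 : n - j = (n - (j+1)) + 1 := by omega
        rw [show n - j - (k+1) = n - (j+1) - k from by omega]
        rw [e1, Nat.choose_succ_succ (n - (j+1)) k]
        rcases le_or_gt (j+k+2) n with h2 | h2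
        · rw [show n - (j+1) - (k+1) = (n - (j+1) - k) - 1 from by omega,
            show n - (j+1) - k = ((n - (j+1) - k) - 1) + 1 from by omega]
          push_cast
          ring
        · rw [Nat.choose_eq_zero_of_lt (show n - (j+1) < k + 1 from by omega)]
          push_cast
          ring
      · rw [Nat.choose_eq_zero_of_lt h]
        push_cast
        ring

lemma keyT (c1 c2 : Col) (h12 : c1 ≠ c2) (w : Col → R) (A : Type) [Fintype A] [DecidableEq A]
    (j k : ℕ) :
    (∑ f ∈ (univ : Finset (A → Col)).filter
        (fun f => (univ.filter fun x => f x = c1).card = j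
          ∧ (univ.filter fun x => f x = c2).card = k),
      ∏ x, w (f x))
    = Fform w c1 c2 (Fintype.card A) j k := by
  rw [← key c1 c2 h12 w (Fintype.card A) j k]
  obtain e := Fintype.equivFin A
  refine Finset.sum_equiv (Equiv.arrowCongr e (Equiv.refl Col)) ?_ ?_
  · intro f
    simp only [mem_filter, mem_univ, true_and, Equiv.arrowCongr_apply, Equiv.refl_symm,
      Equiv.coe_refl, Function.comp, id_eq]
    have hc : ∀ d : Col, (univ.filter fun x : A => f x = d).card
        = (univ.filter fun y : Fin (Fintype.card A) => f (e.symm y) = d).card := by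
      intro d
      apply Finset.card_equiv e
      intro x
      simp
    rw [hc c1, hc c2]
  · intro f _
    simp only [Equiv.arrowCongr_apply, Equiv.refl_symm, Equiv.coe_refl, Function.comp]
    exact (Equiv.prod_comp e.symm (fun x => w (f x))).symm

noncomputable def wX : Col → Polynomial ℤ := fun c => match c with
  | .G => X
  | .W => X
  | _ => 1

lemma prod_wX {A : Type} [Fintype A] [DecidableEq A] (f : A → Col) :
    ∏ x, wX (f x) = (X : Polynomial ℤ) ^ ((univ.filter fun x => f x = Col.G).card
      + (univ.filter fun x => f x = Col.W).card) := by
  rw [card_filter, card_filter, ← Finset.sum_add_distrib, ← Finset.prod_pow_eq_pow_sum]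
  apply Finset.prod_congr rfl
  intro x _
  cases h : f x <;> simp [wX]

lemma WsumRG : Wsum wX Col.R Col.G = 1 + X := by
  rw [Wsum, show (univ.filter fun c => c ≠ Col.R ∧ c ≠ Col.G) = {Col.W, Col.K} from by decide]
  simp [wX]
  ring

lemma WsumGR : Wsum wX Col.G Col.R = 1 + X := by
  rw [Wsum, show (univ.filter fun c => c ≠ Col.G ∧ c ≠ Col.R) = {Col.W, Col.K} from by decide]
  simp [wX]
  ring

lemma instA (A : Type) [Fintype A] [DecidableEq A] (j k : ℕ) :
    (∑ f ∈ (univ : Finset (A → Col)).filter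
        (fun f => (univ.filter fun x => f x = Col.R).card = j
          ∧ (univ.filter fun x => f x = Col.G).card = k),
      (X : Polynomial ℤ) ^ ((univ.filter fun x => f x = Col.G).card
        + (univ.filter fun x => f x = Col.W).card))
    = (((Fintype.card A).choose j * ((Fintype.card A) - j).choose k : ℕ) : Polynomial ℤ)
        * (X ^ k * (1 + X) ^ (Fintype.card A - j - k)) := by
  trans (∑ f ∈ (univ : Finset (A → Col)).filter
        (fun f => (univ.filter fun x => f x = Col.R).card = j
          ∧ (univ.filter fun x => f x = Col.G).card = k), ∏ x, wX (f x))
  · exact Finset.sum_congr rfl (fun f _ => (prod_wX f).symm)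
  · rw [keyT Col.R Col.G (by decide) wX A j k, Fform, WsumRG]
    norm_num [wX]

lemma instB (B : Type) [Fintype B] [DecidableEq B] (j k : ℕ) :
    (∑ f ∈ (univ : Finset (B → Col)).filter
        (fun f => (univ.filter fun x => f x = Col.G).card = j
          ∧ (univ.filter fun x => f x = Col.R).card = k),
      (X : Polynomial ℤ) ^ ((univ.filter fun x => f x = Col.G).card
        + (univ.filter fun x => f x = Col.W).card))
    = (((Fintype.card B).choose j * ((Fintype.card B) - j).choose k : ℕ) : Polynomial ℤ)
        * (X ^ j * (1 + X) ^ (Fintype.card B - j - k)) := by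
  trans (∑ f ∈ (univ : Finset (B → Col)).filter
        (fun f => (univ.filter fun x => f x = Col.G).card = j
          ∧ (univ.filter fun x => f x = Col.R).card = k), ∏ x, wX (f x))
  · exact Finset.sum_congr rfl (fun f _ => (prod_wX f).symm)
  · rw [keyT Col.G Col.R (by decide) wX B j k, Fform, WsumGR]
    norm_num [wX]

lemma card_filter_sum {A B : Type} [Fintype A] [Fintype B] (p : A ⊕ B → Prop) [DecidablePred p] :
    (univ.filter fun z : A ⊕ B => p z).card
      = (univ.filter fun x : A => p (Sum.inl x)).card
        + (univ.filter fun y : B => p (Sum.inr y)).card := by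
  rw [card_filter, Fintype.sum_sum_type, card_filter, card_filter]

lemma chooseprod_eq_zero {N j k : ℕ} (h : N < j + k) : N.choose j * (N - j).choose k = 0 := by
  rcases le_or_gt j N with h1 | h1
  · rw [Nat.choose_eq_zero_of_lt (show N - j < k from by omega), mul_zero]
  · rw [Nat.choose_eq_zero_of_lt h1, zero_mul]

/-- A coloring of `A ⊕ B` is good if the number of red elements of `A` equals the number of
green elements of `B` and the number of green elements of `A` equals the number of red
elements of `B`. -/
def IsGood {A B : Type} [Fintype A] [Fintype B] (c : A ⊕ B → Col) : Prop :=
  (Finset.univ.filter (fun x : A => c (Sum.inl x) = Col.R)).card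
      = (Finset.univ.filter (fun y : B => c (Sum.inr y) = Col.G)).card ∧
  (Finset.univ.filter (fun x : A => c (Sum.inl x) = Col.G)).card
      = (Finset.univ.filter (fun y : B => c (Sum.inr y) = Col.R)).card

instance {A B : Type} [Fintype A] [Fintype B] (c : A ⊕ B → Col) :
    Decidable (IsGood c) := by unfold IsGood; infer_instance

theorem stmt_10 (a b : ℕ) (ha : 1 ≤ a) (hb : 1 ≤ b)
    (A B : Type) [Fintype A] [Fintype B] [DecidableEq A] [DecidableEq B]
    (hA : Fintype.card A = a) (hB : Fintype.card B = b) :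
    ∑ c ∈ Finset.univ.filter (fun c : A ⊕ B → Col => IsGood c),
        (X : Polynomial ℤ) ^ ((Finset.univ.filter (fun z : A ⊕ B => c z = Col.G)).card
          + (Finset.univ.filter (fun z : A ⊕ B => c z = Col.W)).card)
      = ∑ i ∈ Finset.range (min a b + 1),
          C (((2 * i).choose i * a.choose i * b.choose i : ℕ) : ℤ) * X ^ i
            * (1 + X) ^ (a + b - 2 * i) := by
  subst hA hB
  set Na := Fintype.card A with hNa
  set Nb := Fintype.card B with hNb
  -- Step 1: reindex to pairs
  have step1 : (∑ c ∈ Finset.univ.filter (fun c : A ⊕ B → Col => IsGood c),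
        (X : Polynomial ℤ) ^ ((Finset.univ.filter (fun z : A ⊕ B => c z = Col.G)).card
          + (Finset.univ.filter (fun z : A ⊕ B => c z = Col.W)).card))
      = ∑ p ∈ (univ : Finset ((A → Col) × (B → Col))).filter
          (fun p => (univ.filter fun x => p.1 x = Col.R).card
              = (univ.filter fun y => p.2 y = Col.G).card
            ∧ (univ.filter fun x => p.1 x = Col.G).card
              = (univ.filter fun y => p.2 y = Col.R).card),
          (X : Polynomial ℤ) ^ ((univ.filter fun x => p.1 x = Col.G).card
              + (univ.filter fun x => p.1 x = Col.W).card)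
            * X ^ ((univ.filter fun y => p.2 y = Col.G).card
              + (univ.filter fun y => p.2 y = Col.W).card) := by
    refine Finset.sum_equiv (Equiv.sumArrowEquivProdArrow A B Col) ?_ ?_
    · intro c
      rw [Finset.mem_filter, Finset.mem_filter]
      simp [IsGood, Equiv.sumArrowEquivProdArrow]
      exact Iff.rfl
    · intro c _
      simp only [Equiv.sumArrowEquivProdArrow, Equiv.coe_fn_mk, Function.comp]
      rw [card_filter_sum (fun z => c z = Col.G), card_filter_sum (fun z => c z = Col.W),
        ← pow_add]
      exact congrArg (fun m => (X : Polynomial ℤ) ^ m) (Nat.add_add_add_comm _ _ _ _)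
  rw [step1]
  -- Step 2: fiberwise over (rA, gA)
  rw [← Finset.sum_fiberwise_of_maps_to (g := fun p : (A → Col) × (B → Col) =>
      ((univ.filter fun x => p.1 x = Col.R).card, (univ.filter fun x => p.1 x = Col.G).card))
      (t := Finset.range (Na+1) ×ˢ Finset.range (Na+1))
      (fun p _ => by
        simp only [Finset.mem_product, Finset.mem_range]
        constructor <;>
          exact Nat.lt_succ_of_le (le_trans (Finset.card_filter_le _ _)
            (le_of_eq (Finset.card_univ))))]
  -- Step 3: evaluate each fiber
  have step3 : ∀ q ∈ Finset.range (Na+1) ×ˢ Finset.range (Na+1),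
      (∑ p ∈ ((univ : Finset ((A → Col) × (B → Col))).filter
          (fun p => (univ.filter fun x => p.1 x = Col.R).card
              = (univ.filter fun y => p.2 y = Col.G).card
            ∧ (univ.filter fun x => p.1 x = Col.G).card
              = (univ.filter fun y => p.2 y = Col.R).card)).filter
          (fun p => ((univ.filter fun x => p.1 x = Col.R).card,
              (univ.filter fun x => p.1 x = Col.G).card) = q),
        (X : Polynomial ℤ) ^ ((univ.filter fun x => p.1 x = Col.G).card
            + (univ.filter fun x => p.1 x = Col.W).card)
          * X ^ ((univ.filter fun y => p.2 y = Col.G).card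
            + (univ.filter fun y => p.2 y = Col.W).card))
      = ((Na.choose q.1 * (Na - q.1).choose q.2 : ℕ) : Polynomial ℤ)
          * (X ^ q.2 * (1 + X) ^ (Na - q.1 - q.2))
        * (((Nb.choose q.1 * (Nb - q.1).choose q.2 : ℕ) : Polynomial ℤ)
          * (X ^ q.1 * (1 + X) ^ (Nb - q.1 - q.2))) := by
    intro q _
    rw [Finset.filter_filter]
    rw [Finset.filter_congr (s := (univ : Finset ((A → Col) × (B → Col))))
      (q := fun p => ((univ.filter fun x => p.1 x = Col.R).card = q.1
          ∧ (univ.filter fun x => p.1 x = Col.G).card = q.2)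
        ∧ ((univ.filter fun y => p.2 y = Col.G).card = q.1
          ∧ (univ.filter fun y => p.2 y = Col.R).card = q.2))
      (fun p _ => by simp only [Prod.ext_iff]; constructor <;> intro h <;> omega)]
    rw [show (univ : Finset ((A → Col) × (B → Col))) = univ ×ˢ univ from
        (Finset.univ_product_univ).symm,
      Finset.filter_product (fun f : A → Col => (univ.filter fun x => f x = Col.R).card = q.1
          ∧ (univ.filter fun x => f x = Col.G).card = q.2)
        (fun g : B → Col => (univ.filter fun y => g y = Col.G).card = q.1
          ∧ (univ.filter fun y => g y = Col.R).card = q.2),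
      Finset.sum_product]
    dsimp only
    rw [← instA A q.1 q.2, ← instB B q.1 q.2, Finset.sum_mul_sum]
  rw [Finset.sum_congr rfl step3]
  -- Step 4: kill large fibers, regroup by q.1+q.2
  have hzero : ∀ q ∈ Finset.range (Na+1) ×ˢ Finset.range (Na+1),
      (((Na.choose q.1 * (Na - q.1).choose q.2 : ℕ) : Polynomial ℤ)
          * (X ^ q.2 * (1 + X) ^ (Na - q.1 - q.2))
        * (((Nb.choose q.1 * (Nb - q.1).choose q.2 : ℕ) : Polynomial ℤ)
          * (X ^ q.1 * (1 + X) ^ (Nb - q.1 - q.2)))) ≠ 0 → q.1 + q.2 ≤ min Na Nb := by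
    intro q _ hne
    by_contra hgt
    push_neg at hgt
    apply hne
    rcases (show Na < q.1 + q.2 ∨ Nb < q.1 + q.2 from by omega) with h | h
    · rw [chooseprod_eq_zero h]
      simp
    · rw [chooseprod_eq_zero h]
      simp
  rw [← Finset.sum_filter_of_ne hzero]
  rw [← Finset.sum_fiberwise_of_maps_to (g := fun q : ℕ × ℕ => q.1 + q.2)
      (t := Finset.range (min Na Nb + 1))
      (fun q hq => by
        simp only [Finset.mem_filter] at hq
        simp only [Finset.mem_range]
        omega)]
  apply Finset.sum_congr rfl
  intro i hi
  have hi' : i ≤ min Na Nb := by simp only [Finset.mem_range] at hi; omega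
  have hNa' : i ≤ Na := le_trans hi' (min_le_left _ _)
  have hNb' : i ≤ Nb := le_trans hi' (min_le_right _ _)
  have hset : ((Finset.range (Na+1) ×ˢ Finset.range (Na+1)).filter
        (fun q : ℕ × ℕ => q.1 + q.2 ≤ min Na Nb)).filter
        (fun q : ℕ × ℕ => q.1 + q.2 = i) = Finset.HasAntidiagonal.antidiagonal i := by
    ext q
    simp only [Finset.mem_filter, Finset.mem_product, Finset.mem_range,
      Finset.HasAntidiagonal.mem_antidiagonal]
    omega
  rw [hset]
  have step5 : ∀ q ∈ Finset.HasAntidiagonal.antidiagonal i,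
      (((Na.choose q.1 * (Na - q.1).choose q.2 : ℕ) : Polynomial ℤ)
          * (X ^ q.2 * (1 + X) ^ (Na - q.1 - q.2))
        * (((Nb.choose q.1 * (Nb - q.1).choose q.2 : ℕ) : Polynomial ℤ)
          * (X ^ q.1 * (1 + X) ^ (Nb - q.1 - q.2))))
      = ((i.choose q.1 * i.choose q.2 : ℕ) : Polynomial ℤ)
          * (((Na.choose i * Nb.choose i : ℕ) : Polynomial ℤ)
            * (X ^ i * (1 + X) ^ (Na + Nb - 2 * i))) := by
    intro q hq
    rw [Finset.HasAntidiagonal.mem_antidiagonal] at hq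
    have h1 : q.1 ≤ i := by omega
    have e1 : Na.choose i * i.choose q.1 = Na.choose q.1 * (Na - q.1).choose q.2 := by
      rw [Nat.choose_mul h1, show i - q.1 = q.2 from by omega]
    have e2 : Nb.choose i * i.choose q.1 = Nb.choose q.1 * (Nb - q.1).choose q.2 := by
      rw [Nat.choose_mul h1, show i - q.1 = q.2 from by omega]
    have e3 : i.choose q.2 = i.choose q.1 := by
      rw [show q.2 = i - q.1 from by omega]
      exact Nat.choose_symm h1
    have ecoef : (Na.choose q.1 * (Na - q.1).choose q.2) * (Nb.choose q.1 * (Nb - q.1).choose q.2)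
        = (i.choose q.1 * i.choose q.2) * (Na.choose i * Nb.choose i) := by
      rw [e3, ← e1, ← e2]
      ring
    have ecoefZ := congrArg (fun n : ℕ => (n : Polynomial ℤ)) ecoef
    rw [show Na - q.1 - q.2 = Na - i from by omega, show Nb - q.1 - q.2 = Nb - i from by omega,
      show (X : Polynomial ℤ) ^ i = X ^ q.1 * X ^ q.2 from by rw [← pow_add, hq],
      show ((1 : Polynomial ℤ) + X) ^ (Na + Nb - 2 * i) = (1+X) ^ (Na - i) * (1+X) ^ (Nb - i)
        from by rw [← pow_add]; congr 1; omega]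
    push_cast at ecoefZ ⊢
    linear_combination (X ^ q.1 * X ^ q.2 * (1 + X) ^ (Na - i) * (1 + X) ^ (Nb - i)) * ecoefZ
  rw [Finset.sum_congr rfl step5, ← Finset.sum_mul, ← Nat.cast_sum, ← Nat.add_choose_eq,
    map_natCast (Polynomial.C (R := ℤ)), show i + i = 2 * i from by omega]
  push_cast
  ring
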